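/- As formal power series in ℚ[x][[t]], the substitution of e^t - 1 for t in the Boole generating function ∑_{n≥0} 2·Bl_n(x|λ) t^n/n! = 2(1+t)^x/(1+(1+t)^λ) yields the Euler-type generating function (2/(e^{λt}+1)) e^{xt} = ∑_{m≥0} λ^m E_m(x/λ) t^m/m!, for λ a positive integer. -/

import Mathlib

open Finset PowerSeries

/-- Stirling numbers of the second kind. -/
def stirling2 : ℕ → ℕ → ℕ
  | 0, 0 => 1
  | 0, _ + 1 => 0
  | _ + 1, 0 => 0
  | n + 1, k + 1 => (k + 1) * stirling2 n (k + 1) + stirling2 n k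

/-- Unsigned Stirling numbers of the first kind. -/
def stirling1 : ℕ → ℕ → ℕ
  | 0, 0 => 1
  | 0, _ + 1 => 0
  | _ + 1, 0 => 0
  | n + 1, k + 1 => n * stirling1 n (k + 1) + stirling1 n k

/-- Signed Stirling numbers of the first kind. -/
def s1 (n l : ℕ) : ℚ := (-1) ^ (n - l) * (stirling1 n l : ℚ)

/-- The exponential generating function `∑ a n * t^n / n!` as a power series over `ℚ`. -/
noncomputable def egf (a : ℕ → ℚ) : PowerSeries ℚ :=
  PowerSeries.mk fun n => a n / (Nat.factorial n : ℚ)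

/-- The binomial series `(1+t)^x = ∑ (x)_n t^n / n!` for `x : ℚ`. -/
noncomputable def onePlusTPow (x : ℚ) : PowerSeries ℚ :=
  egf fun n => ∏ i ∈ Finset.range n, (x - i)

/-- `e^{xt}` as a power series over `ℚ`. -/
noncomputable def expXT (x : ℚ) : PowerSeries ℚ := egf fun n => x ^ n

noncomputable def Eser : PowerSeries ℚ := PowerSeries.exp ℚ - 1

lemma constantCoeff_Eser : constantCoeff Eser = 0 := by
  simp [Eser, PowerSeries.constantCoeff_exp]

lemma coeff_Eser_pow_of_lt {m n : ℕ} (h : m < n) : PowerSeries.coeff m (Eser ^ n) = 0 := by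
  obtain ⟨g, hg⟩ : (PowerSeries.X : PowerSeries ℚ) ^ n ∣ Eser ^ n :=
    pow_dvd_pow_of_dvd (PowerSeries.X_dvd_iff.2 constantCoeff_Eser) n
  rw [hg, PowerSeries.coeff_mul]
  apply Finset.sum_eq_zero
  intro p hp
  have hp1 : p.1 + p.2 = m := Finset.HasAntidiagonal.mem_antidiagonal.mp hp
  have : p.1 ≠ n := by omega
  simp [PowerSeries.coeff_X_pow, this]

lemma coeff_aeval_vanish (p : Polynomial ℚ) (N : ℕ) (hp : ∀ n < N, p.coeff n = 0)
    {m : ℕ} (hm : m < N) : PowerSeries.coeff m (Polynomial.aeval Eser p) = 0 := by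
  rw [Polynomial.aeval_eq_sum_range, map_sum]
  apply Finset.sum_eq_zero
  intro n _
  rcases lt_or_ge n N with h | h
  · simp [hp n h]
  · rw [PowerSeries.coeff_smul, coeff_Eser_pow_of_lt (lt_of_lt_of_le hm h), smul_zero]

noncomputable def compE (f : PowerSeries ℚ) : PowerSeries ℚ :=
  PowerSeries.mk fun m => PowerSeries.coeff m (Polynomial.aeval Eser (trunc (m + 1) f))

lemma coeff_compE (f : PowerSeries ℚ) {m N : ℕ} (h : m < N) :
    PowerSeries.coeff m (compE f) =
      PowerSeries.coeff m (Polynomial.aeval Eser (trunc N f)) := by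
  rw [compE, coeff_mk]
  have hts : trunc N f = trunc (m + 1) f + (trunc N f - trunc (m + 1) f) := by ring
  rw [hts, map_add, map_add]
  have hv : PowerSeries.coeff m (Polynomial.aeval Eser (trunc N f - trunc (m + 1) f)) = 0 := by
    apply coeff_aeval_vanish _ (m + 1) _ (lt_add_one m)
    intro n hn
    have hnN : n < N := lt_of_le_of_lt (Nat.lt_succ_iff.mp hn) h
    simp [Polynomial.coeff_sub, PowerSeries.coeff_trunc, hn, hnN]
  rw [hv, add_zero]

lemma compE_mul (f g : PowerSeries ℚ) : compE (f * g) = compE f * compE g := by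
  ext m
  rw [coeff_compE _ (lt_add_one m), PowerSeries.coeff_mul]
  have h1 : ∀ p ∈ Finset.HasAntidiagonal.antidiagonal m,
      PowerSeries.coeff p.1 (compE f) * PowerSeries.coeff p.2 (compE g)
        = PowerSeries.coeff p.1 (Polynomial.aeval Eser (trunc (m + 1) f)) *
            PowerSeries.coeff p.2 (Polynomial.aeval Eser (trunc (m + 1) g)) := by
    intro p hp
    have := Finset.HasAntidiagonal.mem_antidiagonal.mp hp
    rw [coeff_compE f (N := m + 1) (by omega), coeff_compE g (N := m + 1) (by omega)]
  rw [Finset.sum_congr rfl h1, ← PowerSeries.coeff_mul, ← map_mul]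
  have key : PowerSeries.coeff m
      (Polynomial.aeval Eser (trunc (m + 1) f * trunc (m + 1) g - trunc (m + 1) (f * g))) = 0 := by
    apply coeff_aeval_vanish _ (m + 1) _ (lt_add_one m)
    intro n hn
    rw [Polynomial.coeff_sub, PowerSeries.coeff_trunc, if_pos hn, sub_eq_zero,
      ← Polynomial.coeff_coe, Polynomial.coe_mul, ← PowerSeries.coeff_mul_eq_coeff_trunc_mul_trunc f g hn]
  rw [map_sub, map_sub] at key
  have := sub_eq_zero.mp key
  rw [← this]

lemma compE_add (f g : PowerSeries ℚ) : compE (f + g) = compE f + compE g := by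
  ext m
  rw [map_add, compE, compE, compE, coeff_mk, coeff_mk, coeff_mk, map_add, map_add, map_add]

lemma compE_one : compE 1 = 1 := by
  ext m
  rw [compE, coeff_mk, trunc_one, Polynomial.aeval_one]

lemma compE_X : compE PowerSeries.X = Eser := by
  ext m
  rw [compE, coeff_mk]
  cases m with
  | zero =>
    have h1 : trunc 1 (PowerSeries.X : PowerSeries ℚ) = 0 := by
      apply Polynomial.ext
      intro n
      rw [PowerSeries.coeff_trunc]
      rcases Nat.eq_zero_or_pos n with h | h
      · subst h; simp [PowerSeries.coeff_X]
      · simp [Nat.not_lt.mpr h]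
    rw [h1, map_zero, PowerSeries.coeff_zero_eq_constantCoeff, constantCoeff_Eser, map_zero]
  | succ k =>
    rw [show k + 1 + 1 = k + 2 from rfl, PowerSeries.trunc_X, Polynomial.aeval_X]

lemma compE_pow (f : PowerSeries ℚ) (n : ℕ) : compE (f ^ n) = compE f ^ n := by
  induction n with
  | zero => simpa using compE_one
  | succ k ih => rw [pow_succ, pow_succ, compE_mul, ih]

lemma coeff_compE_sum (f : PowerSeries ℚ) (m : ℕ) :
    PowerSeries.coeff m (compE f) =
      ∑ n ∈ range (m + 1), PowerSeries.coeff n f * PowerSeries.coeff m (Eser ^ n) := by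
  rw [compE, coeff_mk, Polynomial.aeval_eq_sum_range' (PowerSeries.natDegree_trunc_lt f m), map_sum]
  apply Finset.sum_congr rfl
  intro n hn
  rw [PowerSeries.coeff_smul, smul_eq_mul, PowerSeries.coeff_trunc,
    if_pos (Finset.mem_range.mp hn)]

lemma stirling2_eq_zero_of_lt : ∀ {m n : ℕ}, m < n → stirling2 m n = 0 := by
  intro m
  induction m with
  | zero => intro n h; match n with | k + 1 => rfl
  | succ m ih =>
    intro n h
    match n, h with
    | k + 1, h =>
      show (k + 1) * stirling2 m (k + 1) + stirling2 m k = 0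
      rw [ih (by omega), ih (by omega)]
      ring

lemma derivExpPS : d⁄dX ℚ (PowerSeries.exp ℚ) = PowerSeries.exp ℚ := by
  ext n
  rw [PowerSeries.coeff_derivative, PowerSeries.coeff_exp, PowerSeries.coeff_exp]
  have h1 : ((n + 1).factorial : ℚ) = (n + 1) * n.factorial := by
    rw [Nat.factorial_succ]; push_cast; ring
  have h2 : (n.factorial : ℚ) ≠ 0 := Nat.cast_ne_zero.mpr (Nat.factorial_ne_zero n)
  simp only [Algebra.algebraMap_self, RingHom.id_apply, h1]
  field_simp

lemma deriv_Eser : d⁄dX ℚ Eser = Eser + 1 := by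
  rw [Eser, map_sub, derivExpPS, Derivation.map_one_eq_zero]
  ring

lemma coeff_Eser_pow_succ_rec (m n : ℕ) :
    PowerSeries.coeff (m + 1) (Eser ^ (n + 1)) * (m + 1)
      = (n + 1) * (PowerSeries.coeff m (Eser ^ (n + 1)) + PowerSeries.coeff m (Eser ^ n)) := by
  have h : d⁄dX ℚ (Eser ^ (n + 1)) = (n + 1) • Eser ^ n • d⁄dX ℚ Eser := by
    simpa using Derivation.leibniz_pow (D := d⁄dX ℚ) (a := Eser) (n + 1)
  rw [deriv_Eser] at h
  have h2 := congrArg (PowerSeries.coeff m) h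
  rw [PowerSeries.coeff_derivative] at h2
  rw [h2]
  have hsm : (Eser ^ n : PowerSeries ℚ) • (Eser + 1) = Eser ^ (n + 1) + Eser ^ n := by
    rw [smul_eq_mul]; ring
  rw [hsm, map_nsmul, map_add, nsmul_eq_mul]
  push_cast
  ring

lemma coeff_Eser_pow (m : ℕ) : ∀ n : ℕ,
    (m.factorial : ℚ) * PowerSeries.coeff m (Eser ^ n)
      = (n.factorial : ℚ) * (stirling2 m n : ℚ) := by
  induction m with
  | zero =>
    intro n
    cases n with
    | zero => simp [stirling2]
    | succ k =>
      rw [show Eser ^ (k + 1) = Eser ^ k * Eser from pow_succ _ _]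
      rw [PowerSeries.coeff_zero_eq_constantCoeff, map_mul, constantCoeff_Eser, mul_zero]
      rw [stirling2_eq_zero_of_lt (by omega)]
      simp
  | succ m ih =>
    intro n
    cases n with
    | zero =>
      simp [stirling2, PowerSeries.coeff_one]
    | succ n =>
      have h := coeff_Eser_pow_succ_rec m n
      have h1 := ih (n + 1)
      have h2 := ih n
      have hs : (stirling2 (m + 1) (n + 1) : ℚ)
          = (n + 1) * (stirling2 m (n + 1) : ℚ) + (stirling2 m n : ℚ) := by
        rw [show stirling2 (m + 1) (n + 1) = (n + 1) * stirling2 m (n + 1) + stirling2 m n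
          from rfl]
        push_cast; ring
      have hf1 : ((m + 1).factorial : ℚ) = (m + 1) * m.factorial := by
        rw [Nat.factorial_succ]; push_cast; ring
      have hf2 : ((n + 1).factorial : ℚ) = (n + 1) * n.factorial := by
        rw [Nat.factorial_succ]; push_cast; ring
      rw [hf1, hs, hf2]
      push_cast at h h1 h2 ⊢
      nlinarith [h, h1, h2]

lemma falling_stirling (x : ℚ) : ∀ m : ℕ,
    ∑ n ∈ range (m + 1), (∏ i ∈ range n, (x - i)) * (stirling2 m n : ℚ) = x ^ m := by
  intro m
  induction m with
  | zero => simp [stirling2]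
  | succ m ih =>
    set f : ℕ → ℚ := fun n => ∏ i ∈ range n, (x - i) with hf
    have hstep : ∀ n : ℕ, f (n + 1) = f n * (x - n) := fun n => Finset.prod_range_succ _ _
    rw [Finset.sum_range_succ']
    have h0 : f 0 * (stirling2 (m + 1) 0 : ℚ) = 0 := by
      rw [show stirling2 (m + 1) 0 = 0 from rfl]; simp
    rw [h0, add_zero]
    have hrec : ∀ n : ℕ, (stirling2 (m + 1) (n + 1) : ℚ)
        = (n + 1) * (stirling2 m (n + 1) : ℚ) + (stirling2 m n : ℚ) := by
      intro n
      rw [show stirling2 (m + 1) (n + 1) = (n + 1) * stirling2 m (n + 1) + stirling2 m n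
        from rfl]
      push_cast; ring
    have hsplit : ∑ n ∈ range (m + 1), f (n + 1) * (stirling2 (m + 1) (n + 1) : ℚ)
        = (∑ n ∈ range (m + 1), f (n + 1) * (stirling2 m n : ℚ))
          + ∑ n ∈ range (m + 1), ((n : ℚ) + 1) * f (n + 1) * (stirling2 m (n + 1) : ℚ) := by
      rw [← Finset.sum_add_distrib]
      apply Finset.sum_congr rfl
      intro n _
      rw [hrec n]; ring
    rw [hsplit]
    have hshift : ∑ n ∈ range (m + 1), ((n : ℚ) + 1) * f (n + 1) * (stirling2 m (n + 1) : ℚ)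
        = ∑ n ∈ range (m + 1), (n : ℚ) * f n * (stirling2 m n : ℚ) := by
      have e1 : ∑ n ∈ range (m + 2), (n : ℚ) * f n * (stirling2 m n : ℚ)
          = (∑ n ∈ range (m + 1), ((n : ℚ) + 1) * f (n + 1) * (stirling2 m (n + 1) : ℚ))
            + (0 : ℚ) * f 0 * (stirling2 m 0 : ℚ) := by
        rw [Finset.sum_range_succ']
        push_cast; ring_nf
      have e2 : ∑ n ∈ range (m + 2), (n : ℚ) * f n * (stirling2 m n : ℚ)
          = (∑ n ∈ range (m + 1), (n : ℚ) * f n * (stirling2 m n : ℚ))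
            + ((m : ℚ) + 1) * f (m + 1) * (stirling2 m (m + 1) : ℚ) := by
        rw [Finset.sum_range_succ]; push_cast; ring_nf
      rw [stirling2_eq_zero_of_lt (by omega)] at e2
      simp only [Nat.cast_zero, mul_zero, add_zero, zero_mul] at e1 e2
      linarith [e1, e2]
    rw [hshift, ← Finset.sum_add_distrib]
    have : ∀ n ∈ range (m + 1),
        f (n + 1) * (stirling2 m n : ℚ) + (n : ℚ) * f n * (stirling2 m n : ℚ)
          = x * (f n * (stirling2 m n : ℚ)) := by
      intro n _
      rw [hstep n]; ring
    rw [Finset.sum_congr rfl this, ← Finset.mul_sum, ih, pow_succ]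
    ring


lemma compE_onePlusTPow (x : ℚ) : compE (onePlusTPow x) = expXT x := by
  ext m
  rw [coeff_compE_sum, expXT, egf, coeff_mk]
  have hterm : ∀ n ∈ range (m + 1),
      PowerSeries.coeff n (onePlusTPow x) * PowerSeries.coeff m (Eser ^ n)
        = (∏ i ∈ range n, (x - i)) * (stirling2 m n : ℚ) / (m.factorial : ℚ) := by
    intro n _
    rw [onePlusTPow, egf, coeff_mk]
    have h := coeff_Eser_pow m n
    have hm : (m.factorial : ℚ) ≠ 0 := Nat.cast_ne_zero.mpr (Nat.factorial_ne_zero m)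
    have hn : (n.factorial : ℚ) ≠ 0 := Nat.cast_ne_zero.mpr (Nat.factorial_ne_zero n)
    field_simp
    linear_combination (∏ i ∈ range n, (x - i)) * h
  rw [Finset.sum_congr rfl hterm, ← Finset.sum_div, falling_stirling]

lemma compE_exp_pow (L : ℕ) :
    compE ((1 + PowerSeries.X) ^ L) = PowerSeries.rescale (L : ℚ) (PowerSeries.exp ℚ) := by
  rw [compE_pow, compE_add, compE_one, compE_X]
  have : (1 : PowerSeries ℚ) + Eser = PowerSeries.exp ℚ := by rw [Eser]; ring
  rw [this, PowerSeries.exp_pow_eq_rescale_exp]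

lemma egf_A_eq (Bl : ℕ → ℚ) :
    egf (fun m => ∑ n ∈ Finset.range (m + 1), 2 * Bl n * (stirling2 m n : ℚ))
      = 2 * compE (egf Bl) := by
  ext m
  rw [egf, coeff_mk, show (2 : PowerSeries ℚ) = PowerSeries.C 2 from
      (map_ofNat (PowerSeries.C) 2).symm,
    PowerSeries.coeff_C_mul, coeff_compE_sum, Finset.mul_sum, Finset.sum_div]
  apply Finset.sum_congr rfl
  intro n _
  rw [egf, coeff_mk]
  have h := coeff_Eser_pow m n
  have hm : (m.factorial : ℚ) ≠ 0 := Nat.cast_ne_zero.mpr (Nat.factorial_ne_zero m)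
  have hn : (n.factorial : ℚ) ≠ 0 := Nat.cast_ne_zero.mpr (Nat.factorial_ne_zero n)
  field_simp
  linear_combination (-1 : ℚ) * Bl n * h

lemma rescale_egf (c : ℚ) (a : ℕ → ℚ) :
    PowerSeries.rescale c (egf a) = egf (fun n => c ^ n * a n) := by
  ext m
  rw [PowerSeries.coeff_rescale, egf, egf, coeff_mk, coeff_mk, mul_div_assoc]

lemma rescale_expXT (L : ℕ) (hL : 0 < L) (x : ℚ) :
    PowerSeries.rescale (L : ℚ) (expXT (x / L)) = expXT x := by
  have hLne : (L : ℚ) ≠ 0 := Nat.cast_ne_zero.mpr hL.ne'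
  ext m
  have hfm : (m.factorial : ℚ) ≠ 0 := Nat.cast_ne_zero.mpr (Nat.factorial_ne_zero m)
  have hpw : ((L : ℚ)) ^ m ≠ 0 := pow_ne_zero m hLne
  rw [PowerSeries.coeff_rescale, expXT, expXT, egf, egf, coeff_mk, coeff_mk, div_pow]
  field_simp


theorem boole_subst_exp_sub_one (L : ℕ) (hL : 0 < L) (x : ℚ) (Bl : ℕ → ℚ) (E : ℕ → ℚ → ℚ)
    (hBl : egf Bl * (1 + (1 + PowerSeries.X) ^ L) = onePlusTPow x)
    (hE : ∀ y : ℚ, egf (fun m => E m y) * (PowerSeries.exp ℚ + 1) = 2 * expXT y) :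
    egf (fun m => ∑ n ∈ Finset.range (m + 1), 2 * Bl n * (stirling2 m n : ℚ)) *
        (PowerSeries.rescale (L : ℚ) (PowerSeries.exp ℚ) + 1) = 2 * expXT x ∧
      egf (fun m => ∑ n ∈ Finset.range (m + 1), 2 * Bl n * (stirling2 m n : ℚ)) =
        egf (fun m => (L : ℚ) ^ m * E m (x / L)) := by
  have hLne : (L : ℚ) ≠ 0 := Nat.cast_ne_zero.mpr hL.ne'
  -- apply compE to hBl
  have hcomp := congrArg compE hBl
  rw [compE_mul, compE_add, compE_one, compE_exp_pow, compE_onePlusTPow] at hcomp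
  -- goal 1
  have goal1 : egf (fun m => ∑ n ∈ Finset.range (m + 1), 2 * Bl n * (stirling2 m n : ℚ)) *
      (PowerSeries.rescale (L : ℚ) (PowerSeries.exp ℚ) + 1) = 2 * expXT x := by
    rw [egf_A_eq]
    calc 2 * compE (egf Bl) * (PowerSeries.rescale (L : ℚ) (PowerSeries.exp ℚ) + 1)
        = 2 * (compE (egf Bl) * (1 + PowerSeries.rescale (L : ℚ) (PowerSeries.exp ℚ))) := by
          ring
      _ = 2 * expXT x := by rw [hcomp]
  refine ⟨goal1, ?_⟩
  -- goal 2 via rescaling hE at x / L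
  have hresc := congrArg (PowerSeries.rescale (L : ℚ)) (hE (x / L))
  rw [map_mul, map_add, map_one, map_mul, rescale_egf, rescale_expXT L hL x,
    map_ofNat (PowerSeries.rescale (L : ℚ)) 2]
    at hresc
  -- cancel the unit factor
  have hune : (PowerSeries.rescale (L : ℚ) (PowerSeries.exp ℚ) + 1 : PowerSeries ℚ) ≠ 0 := by
    intro h
    have h0 := congrArg (PowerSeries.coeff 0) h
    rw [map_add, PowerSeries.coeff_rescale, PowerSeries.coeff_exp] at h0
    simp at h0
  exact mul_right_cancel₀ hune (goal1.trans hresc.symm)
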